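/- Let 𝔽 be ℝ or ℂ, let Λ be an index set, and let x = (x_λ), y = (y_λ) be elements of ℓ₁(Λ), the Banach space of absolutely summable families over Λ with norm ‖x‖₁ = Σ_{λ∈Λ} |x_λ|. Then x and y form a parallel pair if and only if there exists a scalar μ ∈ 𝔽 with |μ| = 1 such that μ · conj(x_λ) · y_λ is a nonnegative real number for all λ ∈ Λ; and x and y form a TEA pair if and only if conj(x_λ) · y_λ is a nonnegative real number for all λ ∈ Λ. -/

import Mathlib

open scoped ENNReal

/-- Two vectors in a normed space over `𝕜` form a *parallel pair* if
`‖x + μ • y‖ = ‖x‖ + ‖y‖` for some scalar `μ` with `|μ| = 1`. -/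
def ParallelPair (𝕜 : Type*) {E : Type*} [RCLike 𝕜] [NormedAddCommGroup E] [NormedSpace 𝕜 E]
    (x y : E) : Prop :=
  ∃ μ : 𝕜, ‖μ‖ = 1 ∧ ‖x + μ • y‖ = ‖x‖ + ‖y‖

/-- Two vectors in a normed space form a *triangle equality attaining* (TEA) pair
if `‖x + y‖ = ‖x‖ + ‖y‖`. -/
def TEAPair {E : Type*} [NormedAddCommGroup E] (x y : E) : Prop :=
  ‖x + y‖ = ‖x‖ + ‖y‖

/-- A scalar `z ∈ 𝕜` is a nonnegative real number. -/
def IsNonnegReal {𝕜 : Type*} [RCLike 𝕜] (z : 𝕜) : Prop :=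
  ∃ r : ℝ, 0 ≤ r ∧ z = (r : 𝕜)

open RCLike in
lemma nonneg_iff_re_eq_norm {𝕜 : Type*} [RCLike 𝕜] (z : 𝕜) :
    IsNonnegReal z ↔ re z = ‖z‖ := by
  constructor
  · rintro ⟨r, hr, rfl⟩
    simp [hr, Real.norm_of_nonneg hr]
  · intro h
    refine ⟨‖z‖, norm_nonneg _, ?_⟩
    have h2 : ‖z‖ ^ 2 = re z * re z + im z * im z := RCLike.norm_sq_eq_def
    have him : im z = 0 := by
      rw [h, sq, left_eq_add] at h2
      exact mul_self_eq_zero.mp h2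
    rw [← RCLike.re_add_im z, him, h]
    simp

open RCLike in
lemma scalar_tea {𝕜 : Type*} [RCLike 𝕜] (a b : 𝕜) :
    ‖a + b‖ = ‖a‖ + ‖b‖ ↔ IsNonnegReal ((starRingEnd 𝕜) a * b) := by
  rw [nonneg_iff_re_eq_norm]
  have hn : ‖(starRingEnd 𝕜) a * b‖ = ‖a‖ * ‖b‖ := by
    rw [norm_mul, norm_conj]
  have hsq : ‖a + b‖ ^ 2 = ‖a‖ ^ 2 + 2 * re ((starRingEnd 𝕜) a * b) + ‖b‖ ^ 2 := by
    have := @norm_add_sq 𝕜 𝕜 _ _ _ a b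
    rwa [RCLike.inner_apply, mul_comm b] at this
  rw [hn]
  constructor
  · intro h
    have : ‖a + b‖ ^ 2 = (‖a‖ + ‖b‖) ^ 2 := by rw [h]
    nlinarith
  · intro h
    have : ‖a + b‖ ^ 2 = (‖a‖ + ‖b‖) ^ 2 := by rw [hsq, h]; ring
    nlinarith [norm_nonneg (a + b), norm_nonneg a, norm_nonneg b]

lemma l1_norm_eq {Λ : Type*} {𝕜 : Type*} [RCLike 𝕜] (f : lp (fun _ : Λ => 𝕜) 1) :
    ‖f‖ = ∑' l, ‖f l‖ := by
  have := lp.norm_eq_tsum_rpow (p := 1) (by norm_num) f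
  simpa using this

lemma l1_summable {Λ : Type*} {𝕜 : Type*} [RCLike 𝕜] (f : lp (fun _ : Λ => 𝕜) 1) :
    Summable fun l => ‖f l‖ := by
  have := (lp.memℓp f).summable (p := 1) (by norm_num)
  simpa using this

lemma tea_lp {Λ : Type*} {𝕜 : Type*} [RCLike 𝕜] (x y : lp (fun _ : Λ => 𝕜) 1) :
    ‖x + y‖ = ‖x‖ + ‖y‖ ↔ ∀ l, ‖x l + y l‖ = ‖x l‖ + ‖y l‖ := by
  have hc : ∀ l, (x + y) l = x l + y l := fun l => rfl
  have hxy : ‖x + y‖ = ∑' l, ‖x l + y l‖ := by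
    rw [l1_norm_eq]; exact tsum_congr fun l => by rw [hc]
  have hsum : ‖x‖ + ‖y‖ = ∑' l, (‖x l‖ + ‖y l‖) := by
    rw [l1_norm_eq, l1_norm_eq, ← Summable.tsum_add (l1_summable x) (l1_summable y)]
  rw [hxy, hsum]
  constructor
  · intro h l
    by_contra hne
    have hlt : ‖x l + y l‖ < ‖x l‖ + ‖y l‖ :=
      lt_of_le_of_ne (norm_add_le _ _) hne
    have : ∑' l, ‖x l + y l‖ < ∑' l, (‖x l‖ + ‖y l‖) :=
      Summable.tsum_lt_tsum (fun i => norm_add_le _ _) hlt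
        (by simpa using l1_summable (x + y)) ((l1_summable x).add (l1_summable y))
    exact absurd h this.ne
  · exact fun h => tsum_congr h

lemma tea_lp_char {Λ : Type*} {𝕜 : Type*} [RCLike 𝕜] (x y : lp (fun _ : Λ => 𝕜) 1) :
    ‖x + y‖ = ‖x‖ + ‖y‖ ↔ ∀ l, IsNonnegReal ((starRingEnd 𝕜) (x l) * y l) := by
  rw [tea_lp]
  exact forall_congr' fun l => scalar_tea (x l) (y l)

/-- For `x, y ∈ ℓ₁(Λ)` over `𝔽 = ℝ` or `ℂ`: `x, y` are parallel iff there is a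
unimodular scalar `μ` with `μ * conj(x_λ) * y_λ ≥ 0` for all `λ`; and `x, y` form a
TEA pair iff `conj(x_λ) * y_λ ≥ 0` for all `λ`. -/
theorem l1_inf_parallel_TEA_characterization {𝕜 : Type*} [RCLike 𝕜] {Λ : Type*}
    (x y : lp (fun _ : Λ => 𝕜) 1) :
    (ParallelPair 𝕜 x y ↔
      ∃ μ : 𝕜, ‖μ‖ = 1 ∧ ∀ l : Λ, IsNonnegReal (μ * (starRingEnd 𝕜) (x l) * y l)) ∧
    (TEAPair x y ↔ ∀ l : Λ, IsNonnegReal ((starRingEnd 𝕜) (x l) * y l)) := by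
  constructor
  · unfold ParallelPair
    refine exists_congr fun μ => and_congr_right fun hμ => ?_
    have hnorm : ‖μ • y‖ = ‖y‖ := by rw [norm_smul, hμ, one_mul]
    rw [← hnorm, tea_lp_char]
    refine forall_congr' fun l => ?_
    have hc : (μ • y : lp (fun _ : Λ => 𝕜) 1) l = μ * y l := rfl
    rw [hc]
    have : (starRingEnd 𝕜) (x l) * (μ * y l) = μ * (starRingEnd 𝕜) (x l) * y l := by ring
    rw [this]
  · exact tea_lp_char x y
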